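/- arXiv:2404.06059 — 9 statements merged into one kernel-verified Lean document; each statement's English description precedes it below -/
import Mathlib

section
/- Let n ≥ 1 and let x be an n-bit vector (x : BitVec n). Define y : BitVec (n-1) by letting the i-th bit of y equal (¬ x.msb) AND (the i-th bit of x) for every i < n-1 (i.e., the low n-1 bits of x masked by the negated sign bit). Then (y.toNat : ℤ) = max(x.toInt, 0). (This is the logical correctness of the constant-T-depth ReLU circuit built from an X gate, n-1 shared-control Toffoli gates, and an X gate, for two's-complement input.) -/
/-- Correctness of the constant-T-depth ReLU circuit for two's-complement input:
if every bit `i < n-1` of `y` equals `(¬ msb x) AND (bit i of x)`, then the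
unsigned value of `y` is `max(x.toInt, 0)`. -/
theorem relu_circuit_twos_complement (n : ℕ) (hn : 1 ≤ n) (x : BitVec n)
    (y : BitVec (n - 1)) (hy : ∀ i < n - 1, y.getLsbD i = (!x.msb && x.getLsbD i)) :
    (y.toNat : ℤ) = max x.toInt 0 := by
  have hlast : x.msb = x.getLsbD (n - 1) := BitVec.msb_eq_getLsbD_last x
  have hcond := BitVec.toInt_eq_msb_cond x
  have hxlt : x.toNat < 2 ^ n := x.isLt
  have hylt : y.toNat < 2 ^ (n - 1) := y.isLt
  cases hm : x.msb with
  | false =>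
    have hyx : y.toNat = x.toNat := by
      apply Nat.eq_of_testBit_eq
      intro i
      rcases lt_or_ge i (n - 1) with h | h
      · have := hy i h
        simp only [hm, Bool.not_false, Bool.true_and] at this
        simpa [BitVec.getLsbD] using this
      · have hyf : y.toNat.testBit i = false :=
          Nat.testBit_lt_two_pow (lt_of_lt_of_le hylt (Nat.pow_le_pow_right (by norm_num) h))
        rcases eq_or_lt_of_le h with h' | h'
        · have : x.getLsbD (n - 1) = false := by rw [← hlast, hm]
          rw [hyf, ← h']
          simpa [BitVec.getLsbD] using this.symm
        · have : n ≤ i := by omega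
          rw [hyf]
          exact (Nat.testBit_lt_two_pow (lt_of_lt_of_le hxlt (Nat.pow_le_pow_right (by norm_num) this))).symm
    rw [hm] at hcond
    simp only [if_false, Bool.false_eq_true] at hcond
    rw [hyx, hcond]
    exact (max_eq_left (Int.natCast_nonneg _)).symm
  | true =>
    have hy0 : y.toNat = 0 := by
      apply Nat.eq_of_testBit_eq
      intro i
      rcases lt_or_ge i (n - 1) with h | h
      · have := hy i h
        simp only [hm, Bool.not_true, Bool.false_and] at this
        simpa [BitVec.getLsbD] using this
      · simp [Nat.testBit_lt_two_pow (lt_of_lt_of_le hylt (Nat.pow_le_pow_right (by norm_num) h))]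
    rw [hm] at hcond
    simp only [if_true] at hcond
    have hneg : x.toInt < 0 := by
      rw [hcond]
      have : (x.toNat : ℤ) < 2 ^ n := by exact_mod_cast hxlt
      push_cast
      omega
    rw [hy0, max_eq_right hneg.le]
    simp
end

section
/- Let n ≥ 1 and let x be an n-bit vector in sign-magnitude (true form) representation: its value is v = (-1)^s · m, where s = x.msb and m is the unsigned value of the low n-1 bits of x. Define y : BitVec (n-1) by letting the i-th bit of y equal (¬ s) AND (the i-th bit of x) for every i < n-1. Then (y.toNat : ℤ) = max(v, 0). (This shows the ReLU circuit remains valid for sign-magnitude coded input.) -/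
/-- Correctness of the ReLU circuit for sign-magnitude (true form) input:
the value of `x` is `(-1)^(msb x) * m` where `m` is the unsigned value of the
low `n-1` bits of `x`.  If every bit `i < n-1` of `y` equals
`(¬ msb x) AND (bit i of x)`, then the unsigned value of `y` is `max(v, 0)`. -/
theorem relu_circuit_sign_magnitude (n : ℕ) (hn : 1 ≤ n) (x : BitVec n)
    (y : BitVec (n - 1)) (hy : ∀ i < n - 1, y.getLsbD i = (!x.msb && x.getLsbD i)) :
    (y.toNat : ℤ) =
      max ((-1 : ℤ) ^ x.msb.toNat * ((x.toNat % 2 ^ (n - 1) : ℕ) : ℤ)) 0 := by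
  cases hmsb : x.msb with
  | true =>
    have hy0 : y = 0 := by
      apply BitVec.eq_of_getLsbD_eq
      intro i hi
      simp [hy i hi, hmsb]
    subst hy0
    simp only [hmsb, Bool.toNat_true, pow_one]
    have : (0:ℤ) ≤ ((x.toNat % 2 ^ (n - 1) : ℕ) : ℤ) := Int.ofNat_nonneg _
    simp
    omega
  | false =>
    have hy0 : y = x.truncate (n - 1) := by
      apply BitVec.eq_of_getLsbD_eq
      intro i hi
      rw [hy i hi, hmsb]
      simp [hi]
    subst hy0
    have : (0:ℤ) ≤ ((x.toNat % 2 ^ (n - 1) : ℕ) : ℤ) := Int.ofNat_nonneg _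
    simp [hmsb, BitVec.toNat_setWidth]
    omega
end

section
/- Let n ≥ 1 and let x be an n-bit vector in one's complement representation: its value is v = x.toNat if x.msb = false, and v = x.toNat - (2^n - 1) if x.msb = true. Define y : BitVec (n-1) by letting the i-th bit of y equal (¬ x.msb) AND (the i-th bit of x) for every i < n-1. Then (y.toNat : ℤ) = max(v, 0). (This shows the ReLU circuit remains valid for one's complement coded input.) -/
/-- Correctness of the ReLU circuit for one's-complement input:
the value of `x` is `x.toNat` if the sign bit is `0` and `x.toNat - (2^n - 1)`
if the sign bit is `1`.  If every bit `i < n-1` of `y` equals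
`(¬ msb x) AND (bit i of x)`, then the unsigned value of `y` is `max(v, 0)`. -/
theorem relu_circuit_ones_complement (n : ℕ) (hn : 1 ≤ n) (x : BitVec n)
    (y : BitVec (n - 1)) (hy : ∀ i < n - 1, y.getLsbD i = (!x.msb && x.getLsbD i)) :
    (y.toNat : ℤ) =
      max (if x.msb then (x.toNat : ℤ) - (2 ^ n - 1) else (x.toNat : ℤ)) 0 := by
  cases hmsb : x.msb with
  | true =>
    have hy0 : y = 0 := by
      apply BitVec.eq_of_getLsbD_eq
      intro i hi
      simp [hy i hi, hmsb]
    have hle : (x.toNat : ℤ) ≤ 2 ^ n - 1 := by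
      have := x.isLt
      have : (x.toNat : ℤ) < 2 ^ n := by exact_mod_cast this
      omega
    simp [hy0]
    omega
  | false =>
    have hyx : y.toNat = x.toNat := by
      apply Nat.eq_of_testBit_eq
      intro i
      rcases lt_or_ge i (n - 1) with h | h
      · have h1 : y.toNat.testBit i = y.getLsbD i := rfl
        have h2 : x.toNat.testBit i = x.getLsbD i := rfl
        rw [h1, h2, hy i h, hmsb]
        simp
      · have h1 : y.toNat.testBit i = false := by
          have : y.getLsbD i = false := BitVec.getLsbD_of_ge y i h
          exact this
        rcases eq_or_lt_of_le h with h' | h'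
        · subst h'
          have h2 : x.toNat.testBit (n-1) = false := by
            show x.getLsbD (n-1) = false
            rw [← BitVec.msb_eq_getLsbD_last, hmsb]
          rw [h1, h2]
        · have h2 : x.toNat.testBit i = false := by
            have : x.getLsbD i = false := BitVec.getLsbD_of_ge x i (by omega)
            exact this
          rw [h1, h2]
    simp [hyx]
end

section
/- Let n ≥ 1. Suppose g : BitVec n → BitVec (n-1) × BitVec r is an injective map whose first component computes the ReLU function, i.e., (((g x).1).toNat : ℤ) = max(x.toInt, 0) for all x : BitVec n. Then r ≥ n; in particular, any reversible computation of the n-bit ReLU function uses at least (n-1) + n = 2n - 1 bits in total. (There are 2^{n-1} + 1 inputs with x.toInt ≤ 0, all sharing the output value 0, so injectivity forces 2^r ≥ 2^{n-1} + 1.) -/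
instance bitVecFintype (m : ℕ) : Fintype (BitVec m) :=
  Fintype.ofEquiv (Fin (2 ^ m)) ⟨BitVec.ofFin, BitVec.toFin, fun _ => rfl, fun _ => rfl⟩

theorem bitVec_card (m : ℕ) : Fintype.card (BitVec m) = 2 ^ m := by
  rw [bitVecFintype, Fintype.ofEquiv_card, Fintype.card_fin]

/-- Any reversible (injective) computation of the `n`-bit ReLU whose first
component stores the `(n-1)`-bit result needs at least `n` further bits:
there are `2^(n-1) + 1` inputs with `x.toInt ≤ 0`, all sharing output `0`. -/
theorem relu_reversible_lower_bound (n r : ℕ) (hn : 1 ≤ n)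
    (g : BitVec n → BitVec (n - 1) × BitVec r)
    (hinj : Function.Injective g)
    (hg : ∀ x : BitVec n, (((g x).1).toNat : ℤ) = max x.toInt 0) :
    n ≤ r := by
  have h2 : 2 ^ (n - 1) * 2 = 2 ^ n := by
    rw [← pow_succ]; congr 1; omega
  -- the embedding into BitVec n
  set f : Option (BitVec (n - 1)) → BitVec n := fun o =>
    match o with
    | none => 0#n
    | some y => BitVec.ofNat n (y.toNat + 2 ^ (n - 1)) with hf
  have htoNat : ∀ y : BitVec (n - 1), (f (some y)).toNat = y.toNat + 2 ^ (n - 1) := by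
    intro y
    have hy := y.isLt
    simp only [hf, BitVec.toNat_ofNat]
    apply Nat.mod_eq_of_lt
    omega
  have hneg : ∀ o, (f o).toInt ≤ 0 := by
    intro o
    match o with
    | none => simp [hf, BitVec.toInt_eq_toNat_cond]
    | some y =>
      rw [BitVec.toInt_eq_toNat_cond]
      have hy := y.isLt
      have ht := htoNat y
      have : ¬ 2 * (f (some y)).toNat < 2 ^ n := by omega
      rw [if_neg this]
      have : ((f (some y)).toNat : ℤ) = (y.toNat : ℤ) + 2 ^ (n-1) := by rw [ht]; push_cast; ring
      push_cast at this ⊢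
      have h2' : ((2:ℤ)) ^ (n-1) * 2 = 2 ^ n := by exact_mod_cast h2
      omega
  have hfst : ∀ o, (g (f o)).1 = 0 := by
    intro o
    have := hg (f o)
    have h0 : max (f o).toInt 0 = 0 := max_eq_right (hneg o)
    rw [h0] at this
    have : ((g (f o)).1).toNat = 0 := by exact_mod_cast this
    exact BitVec.eq_of_toNat_eq (by simpa using this)
  have hfinj : Function.Injective f := by
    intro a b hab
    match a, b with
    | none, none => rfl
    | some y, some z =>
      have : (f (some y)).toNat = (f (some z)).toNat := by rw [hab]
      rw [htoNat, htoNat] at this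
      have : y.toNat = z.toNat := by omega
      exact congrArg some (BitVec.eq_of_toNat_eq this)
    | none, some y =>
      have : (f none).toNat = (f (some y)).toNat := by rw [hab]
      rw [htoNat] at this
      simp only [hf, BitVec.toNat_ofNat, Nat.zero_mod] at this
      have : 0 < 2 ^ (n-1) := Nat.pow_pos (by norm_num : 0 < 2)
      omega
    | some y, none =>
      have : (f (some y)).toNat = (f none).toNat := by rw [hab]
      rw [htoNat] at this
      simp only [hf, BitVec.toNat_ofNat, Nat.zero_mod] at this
      have : 0 < 2 ^ (n-1) := Nat.pow_pos (by norm_num : 0 < 2)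
      omega
  have hinj2 : Function.Injective (fun o => (g (f o)).2) := by
    intro a b hab
    apply hfinj
    apply hinj
    have := hfst a
    have := hfst b
    ext1
    · rw [hfst a, hfst b]
    · exact hab
  have hcard := Fintype.card_le_of_injective _ hinj2
  rw [Fintype.card_option, bitVec_card, bitVec_card] at hcard
  -- hcard : 2^(n-1) + 1 ≤ 2^r
  have : 2 ^ (n - 1) < 2 ^ r := by omega
  have := (Nat.pow_lt_pow_iff_right (by norm_num : 1 < 2)).mp this
  omega
end

section
/- Let Q be a type (of qubits), let m_1, …, m_D : Q → Q be involutions (m_d ∘ m_d = id), and let I be an index type. Suppose for each i ∈ I we are given sets S_{0,i} ⊆ Q that are pairwise disjoint, and sets S_{d,i} ⊆ Q for 1 ≤ d ≤ D satisfying S_{d,i} ⊆ S_{d-1,i} ∪ m_d '' S_{d-1,i}. Then for every q ∈ Q, the number of indices i ∈ I with q ∈ S_{D,i} is at most 2^D. (This is the influence-doubling lemma underlying the Ω(log n) depth lower bound for ReLU circuits.) -/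
/-- Influence-doubling lemma: with layers given by involutions `m 1, …, m D` on
the qubits `Q`, pairwise disjoint initial sets `S 0 i`, and influence sets
satisfying `S d i ⊆ S (d-1) i ∪ m d '' S (d-1) i`, each qubit `q` belongs to
`S D i` for at most `2^D` indices `i`. -/
theorem influence_doubling {Q I : Type*} (D : ℕ) (m : ℕ → Q → Q)
    (hinv : ∀ d, 1 ≤ d → d ≤ D → m d ∘ m d = id)
    (S : ℕ → I → Set Q)
    (hdisj : Pairwise fun i j => Disjoint (S 0 i) (S 0 j))
    (hS : ∀ d, 1 ≤ d → d ≤ D → ∀ i, S d i ⊆ S (d - 1) i ∪ m d '' S (d - 1) i)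
    (q : Q) :
    {i | q ∈ S D i}.Finite ∧ {i | q ∈ S D i}.ncard ≤ 2 ^ D := by
  suffices h : ∀ d, d ≤ D → ∀ q : Q,
      {i | q ∈ S d i}.Finite ∧ {i | q ∈ S d i}.ncard ≤ 2 ^ d from h D le_rfl q
  intro d
  induction d with
  | zero =>
    intro _ q
    have hsub : {i | q ∈ S 0 i}.Subsingleton := by
      intro i hi j hj
      by_contra hij
      exact (hdisj hij).ne_of_mem hi hj rfl
    refine ⟨hsub.finite, ?_⟩
    simpa using (Set.ncard_le_one_iff_eq hsub.finite).mpr hsub.eq_empty_or_singleton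
  | succ d ih =>
    intro hle q
    have hd1 : 1 ≤ d + 1 := Nat.le_add_left 1 d
    have hsub : {i | q ∈ S (d + 1) i} ⊆ {i | q ∈ S d i} ∪ {i | m (d + 1) q ∈ S d i} := by
      intro i hi
      rcases hS (d + 1) hd1 hle i hi with h | ⟨x, hx, hxq⟩
      · exact Or.inl (by simpa using h)
      · right
        have : m (d + 1) (m (d + 1) x) = x := congrFun (hinv (d + 1) hd1 hle) x
        simp only [Set.mem_setOf_eq]
        rw [← hxq, this]
        simpa using hx
    obtain ⟨hf1, hc1⟩ := ih (le_of_lt hle) q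
    obtain ⟨hf2, hc2⟩ := ih (le_of_lt hle) (m (d + 1) q)
    have hfin : {i | q ∈ S (d + 1) i}.Finite := (hf1.union hf2).subset hsub
    refine ⟨hfin, ?_⟩
    calc {i | q ∈ S (d + 1) i}.ncard ≤ ({i | q ∈ S d i} ∪ {i | m (d + 1) q ∈ S d i}).ncard :=
          Set.ncard_le_ncard hsub (hf1.union hf2)
      _ ≤ {i | q ∈ S d i}.ncard + {i | m (d + 1) q ∈ S d i}.ncard :=
          Set.ncard_union_le _ _
      _ ≤ 2 ^ d + 2 ^ d := Nat.add_le_add hc1 hc2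
      _ = 2 ^ (d + 1) := by ring
end

section
/- Let Q be a type, let m_1, …, m_D : Q → Q be involutions, and let i range over Fin (n-1) for some n ≥ 2. Suppose the sets S_{0,i} ⊆ Q are pairwise disjoint and nonempty, and S_{d,i} ⊆ S_{d-1,i} ∪ m_d '' S_{d-1,i} for 1 ≤ d ≤ D. If there exists a single element q ∈ Q with q ∈ S_{D,i} for every i ∈ Fin (n-1), then n - 1 ≤ 2^D; equivalently, D ≥ log₂(n-1). (Since the sign qubit of an n-bit ReLU circuit must influence all n-1 output qubits, circuit depth is lower bounded by Ω(log n).) -/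
/-- Ω(log n) depth lower bound: if a single qubit `q` influences all `n-1`
output qubits (i.e. belongs to every `S D i` for pairwise disjoint nonempty
initial sets `S 0 i`), then `n - 1 ≤ 2^D`. -/
theorem relu_depth_lower_bound_log {Q : Type*} (n D : ℕ) (hn : 2 ≤ n)
    (m : ℕ → Q → Q)
    (hinv : ∀ d, 1 ≤ d → d ≤ D → m d ∘ m d = id)
    (S : ℕ → Fin (n - 1) → Set Q)
    (hdisj : Pairwise fun i j => Disjoint (S 0 i) (S 0 j))
    (hne : ∀ i, (S 0 i).Nonempty)
    (hS : ∀ d, 1 ≤ d → d ≤ D → ∀ i, S d i ⊆ S (d - 1) i ∪ m d '' S (d - 1) i)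
    (hq : ∃ q : Q, ∀ i, q ∈ S D i) :
    n - 1 ≤ 2 ^ D := by
  obtain ⟨q, hq⟩ := hq
  -- backward light cone: T k is the set of qubits at depth D - k that can influence q
  set T : ℕ → Set Q := fun k => Nat.rec {q} (fun k Tk => Tk ∪ m (D - k) '' Tk) k with hT
  have hT0 : T 0 = {q} := rfl
  have hTsucc : ∀ k, T (k + 1) = T k ∪ m (D - k) '' T k := fun k => rfl
  have hfin : ∀ k, (T k).Finite := by
    intro k
    induction k with
    | zero => exact Set.finite_singleton q
    | succ k ih => rw [hTsucc]; exact ih.union (ih.image _)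
  have hcard : ∀ k, (T k).ncard ≤ 2 ^ k := by
    intro k
    induction k with
    | zero => simp [hT0]
    | succ k ih =>
      rw [hTsucc]
      calc (T k ∪ m (D - k) '' T k).ncard
          ≤ (T k).ncard + (m (D - k) '' T k).ncard :=
            Set.ncard_union_le _ _
        _ ≤ (T k).ncard + (T k).ncard := by
            exact Nat.add_le_add_left (Set.ncard_image_le (hfin k)) _
        _ ≤ 2 ^ k + 2 ^ k := Nat.add_le_add ih ih
        _ = 2 ^ (k + 1) := by ring
  -- every S (D - k) i meets T k
  have hmeet : ∀ k, k ≤ D → ∀ i, (S (D - k) i ∩ T k).Nonempty := by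
    intro k
    induction k with
    | zero => intro _ i; exact ⟨q, hq i, rfl⟩
    | succ k ih =>
      intro hk i
      obtain ⟨x, hxS, hxT⟩ := ih (Nat.le_of_succ_le hk) i
      have hd1 : 1 ≤ D - k := by omega
      have hd2 : D - k ≤ D := Nat.sub_le _ _
      have hsub := hS (D - k) hd1 hd2 i hxS
      have heq : D - k - 1 = D - (k + 1) := by omega
      rcases hsub with h | ⟨y, hyS, hyx⟩
      · exact ⟨x, by rwa [heq] at h, Or.inl hxT⟩
      · refine ⟨y, by rwa [heq] at hyS, Or.inr ⟨x, hxT, ?_⟩⟩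
        have := congrFun (hinv (D - k) hd1 hd2) y
        simp only [Function.comp_apply, id_eq] at this
        rw [← hyx]
        exact this
  -- choose a point of T D in each S 0 i; disjointness makes the choice injective
  have hmeet0 := hmeet D le_rfl
  simp only [Nat.sub_self] at hmeet0
  choose f hfS hfT using hmeet0
  have hinj : Function.Injective f := by
    intro i j hij
    by_contra hne'
    exact (hdisj hne').ne_of_mem (hfS i) (hfS j) hij
  classical
  have : n - 1 = Fintype.card (Fin (n - 1)) := (Fintype.card_fin _).symm
  rw [this]
  calc Fintype.card (Fin (n - 1)) ≤ (T D).ncard := by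
        have : Fintype.card (Fin (n - 1)) ≤ ((hfin D).toFinset).card := by
          apply Finset.card_le_card_of_injOn f
          · intro i _; simpa using hfT i
          · exact fun a _ b _ h => hinj h
        exact this.trans_eq (Set.ncard_eq_toFinset_card _ (hfin D)).symm
    _ ≤ 2 ^ D := hcard D
end

section
/- Let n ≥ 2 and let m_1, …, m_D : ℤ × ℤ → ℤ × ℤ be involutions that move points only to L1-adjacent grid points (for every p, either m_d p = p or m_d p is at L1 distance 1 from p). Let o_1, …, o_{n-1} ∈ ℤ × ℤ be pairwise distinct, and define for each i the sets S_{0,i} = {o_i} and S_{d,i} ⊆ S_{d-1,i} ∪ m_d '' S_{d-1,i} for 1 ≤ d ≤ D. If there exists q ∈ ℤ × ℤ with q ∈ S_{D,i} for every i, then n - 1 ≤ 2D² + 2D + 1. Consequently D = Ω(√n). (This is the Ω(√n) depth lower bound for implementing the n-bit ReLU function on a 2D grid.) -/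
open Finset

/-- Explicit parametrization of the L1 sphere of radius `k`. -/
def sphereWalk (k t : ℕ) : ℤ × ℤ :=
  if t < k then ((t : ℤ), (k : ℤ) - t)
  else if t < 2 * k then (2 * (k : ℤ) - t, (k : ℤ) - t)
  else if t < 3 * k then (2 * (k : ℤ) - t, (t : ℤ) - 3 * k)
  else ((t : ℤ) - 4 * k, (t : ℤ) - 3 * k)

lemma sphereWalk_covers (k : ℕ) (hk : 1 ≤ k) (x y : ℤ)
    (h : x.natAbs + y.natAbs = k) : ∃ t < 4 * k, sphereWalk k t = (x, y) := by
  have hcases : (0 ≤ x ∧ 0 < y) ∨ (0 < x ∧ y ≤ 0) ∨ (x ≤ 0 ∧ y < 0) ∨ (x < 0 ∧ 0 ≤ y) := by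
    omega
  rcases hcases with ⟨h1, h2⟩ | ⟨h1, h2⟩ | ⟨h1, h2⟩ | ⟨h1, h2⟩
  · exact ⟨x.toNat, by omega, by
      simp only [sphereWalk]; split_ifs <;> simp only [Prod.mk.injEq] <;> omega⟩
  · exact ⟨(2 * (k : ℤ) - x).toNat, by omega, by
      simp only [sphereWalk]; split_ifs <;> simp only [Prod.mk.injEq] <;> omega⟩
  · exact ⟨(2 * (k : ℤ) - x).toNat, by omega, by
      simp only [sphereWalk]; split_ifs <;> simp only [Prod.mk.injEq] <;> omega⟩
  · exact ⟨(4 * (k : ℤ) + x).toNat, by omega, by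
      simp only [sphereWalk]; split_ifs <;> simp only [Prod.mk.injEq] <;> omega⟩

/-- The L1 ball of radius `D` in `ℤ × ℤ` as a finset. -/
noncomputable def ballF (D : ℕ) : Finset (ℤ × ℤ) :=
  (Finset.Icc (-(D : ℤ)) D ×ˢ Finset.Icc (-(D : ℤ)) D).filter
    (fun p => p.1.natAbs + p.2.natAbs ≤ D)

lemma mem_ballF {D : ℕ} {p : ℤ × ℤ} :
    p ∈ ballF D ↔ p.1.natAbs + p.2.natAbs ≤ D := by
  simp only [ballF, Finset.mem_filter, Finset.mem_product, Finset.mem_Icc]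
  constructor
  · rintro ⟨-, h⟩; exact h
  · intro h; omega

lemma card_ballF (D : ℕ) : (ballF D).card ≤ 2 * D ^ 2 + 2 * D + 1 := by
  induction D with
  | zero =>
    have hsub : ballF 0 ⊆ {((0 : ℤ), (0 : ℤ))} := by
      intro p hp
      rw [mem_ballF] at hp
      simp only [Finset.mem_singleton]
      have : p = (p.1, p.2) := rfl
      rw [this]
      have h1 : p.1 = 0 := by omega
      have h2 : p.2 = 0 := by omega
      rw [h1, h2]
    calc (ballF 0).card ≤ ({((0 : ℤ), (0 : ℤ))} : Finset (ℤ × ℤ)).card :=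
          Finset.card_le_card hsub
      _ = 1 := Finset.card_singleton _
      _ ≤ _ := by norm_num
  | succ D ih =>
    have hsub : ballF (D + 1) ⊆
        ballF D ∪ (Finset.range (4 * (D + 1))).image (sphereWalk (D + 1)) := by
      intro p hp
      rw [mem_ballF] at hp
      rcases Nat.lt_or_ge (p.1.natAbs + p.2.natAbs) (D + 1) with h | h
      · exact Finset.mem_union_left _ (mem_ballF.mpr (by omega))
      · have heq : p.1.natAbs + p.2.natAbs = D + 1 := by omega
        obtain ⟨t, ht, hgt⟩ := sphereWalk_covers (D + 1) (by omega) p.1 p.2 heq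
        refine Finset.mem_union_right _ (Finset.mem_image.mpr ⟨t, Finset.mem_range.mpr ht, ?_⟩)
        rw [hgt]
    calc (ballF (D + 1)).card
        ≤ (ballF D ∪ (Finset.range (4 * (D + 1))).image (sphereWalk (D + 1))).card :=
          Finset.card_le_card hsub
      _ ≤ (ballF D).card + ((Finset.range (4 * (D + 1))).image (sphereWalk (D + 1))).card :=
          Finset.card_union_le _ _
      _ ≤ (2 * D ^ 2 + 2 * D + 1) + (4 * (D + 1)) := by
          have := Finset.card_image_le (s := Finset.range (4 * (D + 1)))
            (f := sphereWalk (D + 1))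
          simp only [Finset.card_range] at this
          omega
      _ ≤ 2 * (D + 1) ^ 2 + 2 * (D + 1) + 1 := by ring_nf; omega

/-- Ω(√n) depth lower bound for ReLU on a 2D grid: with layers given by
involutions moving points only to L1-adjacent grid points, pairwise distinct
origins `o i`, `S 0 i = {o i}` and `S d i ⊆ S (d-1) i ∪ m d '' S (d-1) i`,
if a single point `q` belongs to every `S D i` then `n - 1 ≤ 2D² + 2D + 1`. -/
theorem relu_grid_depth_lower_bound (n D : ℕ) (hn : 2 ≤ n)
    (m : ℕ → ℤ × ℤ → ℤ × ℤ)
    (hinv : ∀ d, 1 ≤ d → d ≤ D → m d ∘ m d = id)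
    (hloc : ∀ d, 1 ≤ d → d ≤ D → ∀ p : ℤ × ℤ,
      m d p = p ∨ |(m d p).1 - p.1| + |(m d p).2 - p.2| = 1)
    (o : Fin (n - 1) → ℤ × ℤ) (ho : Function.Injective o)
    (S : ℕ → Fin (n - 1) → Set (ℤ × ℤ))
    (hS0 : ∀ i, S 0 i = {o i})
    (hS : ∀ d, 1 ≤ d → d ≤ D → ∀ i, S d i ⊆ S (d - 1) i ∪ m d '' S (d - 1) i)
    (hq : ∃ q : ℤ × ℤ, ∀ i, q ∈ S D i) :
    n - 1 ≤ 2 * D ^ 2 + 2 * D + 1 := by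
  obtain ⟨q, hq⟩ := hq
  -- every point of `S d i` is within L1 distance `d` of `o i`
  have key : ∀ d, d ≤ D → ∀ i, ∀ p ∈ S d i,
      (p.1 - (o i).1).natAbs + (p.2 - (o i).2).natAbs ≤ d := by
    intro d
    induction d with
    | zero =>
      intro _ i p hp
      rw [hS0 i] at hp
      rw [Set.mem_singleton_iff] at hp
      subst hp
      simp
    | succ d ih =>
      intro hd i p hp
      have hsub := hS (d + 1) (by omega) hd i hp
      rcases hsub with h | ⟨p', hp', rfl⟩
      · have := ih (by omega) i p h
        omega
      · have h1 := ih (by omega) i p' hp'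
        rcases hloc (d + 1) (by omega) hd p' with he | hd1
        · rw [he]; omega
        · rw [Int.abs_eq_natAbs, Int.abs_eq_natAbs] at hd1
          omega
  -- inject the origins into the L1 ball of radius D around q
  have hball : ∀ i, ((o i).1 - q.1, (o i).2 - q.2) ∈ ballF D := by
    intro i
    have := key D le_rfl i q (hq i)
    rw [mem_ballF]
    simp only
    omega
  have hinj : Set.InjOn (fun i => ((o i).1 - q.1, (o i).2 - q.2))
      (Finset.univ : Finset (Fin (n - 1))) := by
    intro i _ j _ hij
    simp only [Prod.mk.injEq] at hij
    apply ho
    have : o i = ((o i).1, (o i).2) := rfl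
    rw [this]
    have : o j = ((o j).1, (o j).2) := rfl
    rw [this]
    simp only [Prod.mk.injEq]
    omega
  have hcard := Finset.card_le_card_of_injOn _ (fun i _ => hball i) hinj
  simp only [Finset.card_univ, Fintype.card_fin] at hcard
  exact hcard.trans (card_ballF D)
end

section
/- Let n ≥ 1 and j ≥ 1, and set α = 2^{-j}. For x : BitVec n define h(x) : BitVec (n+j) by h(x) = x.signExtend(n+j) if x.msb = true, and h(x) = (x.signExtend(n+j)) <<< j (left shift by j) if x.msb = false. Then ((h(x)).toInt : ℚ) / 2^j = max((x.toInt : ℚ), α · (x.toInt : ℚ)); equivalently, (h(x)).toInt = x.toInt if x.msb = true and (h(x)).toInt = 2^j · x.toInt if x.msb = false. (This is the logical correctness of the constant-T-depth Leaky ReLU circuit for two's-complement input, where the output is a fixed-point number with j fractional bits whose value is its two's-complement integer divided by 2^j.) -/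
private lemma bmod_self_of (m : ℕ) (i : ℤ) (h1 : -m ≤ 2*i) (h2 : 2*i < m) :
    i.bmod m = i := by
  have hm : 0 < (m:ℤ) := by omega
  rw [Int.bmod_def]
  rcases le_or_gt 0 i with hi | hi
  · rw [Int.emod_eq_of_lt hi (by omega)]
    split <;> omega
  · have h3 : i % (m:ℤ) = i + m := by
      have e : (i + (m:ℤ) * 1) % (m:ℤ) = i % (m:ℤ) := Int.add_mul_emod_self_left ..
      rw [mul_one] at e
      rw [← e, Int.emod_eq_of_lt (by omega) (by omega)]
    rw [h3]
    split <;> omega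

/-- Correctness of the constant-T-depth Leaky ReLU circuit for
two's-complement input with `α = 2⁻ʲ`: the output `h x : BitVec (n+j)` is the
sign extension of `x` when `msb x = true` and the sign extension shifted left
by `j` when `msb x = false`; its fixed-point value `(h x).toInt / 2^j` equals
`max(x.toInt, α · x.toInt)`. -/
theorem leaky_relu_circuit_twos_complement (n j : ℕ) (hn : 1 ≤ n) (hj : 1 ≤ j)
    (x : BitVec n) :
    (((if x.msb then x.signExtend (n + j)
        else x.signExtend (n + j) <<< j).toInt : ℚ)) / 2 ^ j =
      max ((x.toInt : ℚ)) ((1 / 2 ^ j) * (x.toInt : ℚ)) := by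
  have hlt := x.isLt
  have hpow : (2:ℕ)^(n-1) * 2 = 2^n := by
    rw [← pow_succ]; congr 1; omega
  have hpownj : (2:ℕ)^n * 2^j = 2^(n+j) := (pow_add 2 n j).symm
  have htc := BitVec.toInt_eq_toNat_cond x
  have h2q : (0:ℚ) < 2^j := by positivity
  cases hmsb : x.msb with
  | false =>
    -- x.toInt = x.toNat ≥ 0, and toNat < 2^(n-1)
    have hsmall : x.toNat < 2^(n-1) := by
      by_contra h
      rw [BitVec.msb_eq_toNat] at hmsb
      simp at hmsb; omega
    have hx2 : 2 * x.toNat < 2^n := by omega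
    have hxint : x.toInt = (x.toNat : ℤ) := by
      rw [htc, if_pos (by exact_mod_cast by omega)]
    -- compute toInt of the shifted value
    have hse := BitVec.signExtend_eq_setWidth_of_msb_false (v := n + j) hmsb
    have htn : (x.signExtend (n + j) <<< j).toNat = x.toNat * 2^j := by
      rw [hse]
      simp only [BitVec.toNat_shiftLeft, BitVec.toNat_setWidth, Nat.shiftLeft_eq]
      have h1 : x.toNat % 2^(n+j) = x.toNat := Nat.mod_eq_of_lt
        (lt_of_lt_of_le hlt (Nat.pow_le_pow_right (by norm_num) (by omega)))
      rw [h1]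
      exact Nat.mod_eq_of_lt (by
        calc x.toNat * 2^j < 2^n * 2^j :=
              (Nat.mul_lt_mul_right (Nat.two_pow_pos j)).mpr hlt
          _ = 2^(n+j) := hpownj)
    have hti : (x.signExtend (n + j) <<< j).toInt = (x.toNat : ℤ) * 2^j := by
      rw [BitVec.toInt_eq_toNat_cond, htn, if_pos]
      · push_cast; ring
      · have : 2 * (x.toNat * 2^j) < 2^(n+j) := by
          calc 2 * (x.toNat * 2^j) = (2 * x.toNat) * 2^j := by ring
            _ < 2^n * 2^j := (Nat.mul_lt_mul_right (Nat.two_pow_pos j)).mpr hx2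
            _ = 2^(n+j) := hpownj
        exact_mod_cast this
    simp only [hmsb, Bool.false_eq_true, if_false, hti, hxint]
    have hnn : (0:ℚ) ≤ (x.toNat : ℚ) := by positivity
    rw [max_eq_left (by
      rw [one_div]
      calc (2^j : ℚ)⁻¹ * (x.toNat : ℚ) ≤ 1 * (x.toNat : ℚ) := by
            apply mul_le_mul_of_nonneg_right _ hnn
            rw [inv_le_one_iff₀]; right; exact one_le_pow₀ (by norm_num)
        _ = (x.toNat : ℚ) := one_mul _)]
    push_cast
    field_simp
  | true =>
    -- x.toInt < 0
    have hbig : 2^(n-1) ≤ x.toNat := by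
      by_contra h
      rw [BitVec.msb_eq_toNat] at hmsb
      simp at hmsb; omega
    have hge : 2^n ≤ 2 * x.toNat := by omega
    have hxint : x.toInt = (x.toNat : ℤ) - 2^n := by
      rw [htc, if_neg (by omega)]; push_cast; ring
    have hneg : x.toInt < 0 := by rw [hxint]; omega
    have hbounds : -(2^n : ℤ) ≤ 2 * x.toInt ∧ 2 * x.toInt < 2^n := by
      rw [hxint]; omega
    have hti : (x.signExtend (n + j)).toInt = x.toInt := by
      unfold BitVec.signExtend
      rw [BitVec.toInt_ofInt]
      apply bmod_self_of
      · push_cast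
        have : (2^n : ℤ) ≤ 2^(n+j) := by
          exact_mod_cast Nat.pow_le_pow_right (by norm_num) (by omega)
        omega
      · push_cast
        have : (2^n : ℤ) ≤ 2^(n+j) := by
          exact_mod_cast Nat.pow_le_pow_right (by norm_num) (by omega)
        omega
    simp only [hmsb, if_true, hti]
    have hnegq : (x.toInt : ℚ) < 0 := by exact_mod_cast hneg
    rw [max_eq_right (by
      rw [one_div]
      calc (x.toInt : ℚ) = 1 * (x.toInt : ℚ) := (one_mul _).symm
        _ ≤ (2^j : ℚ)⁻¹ * (x.toInt : ℚ) := by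
            apply mul_le_mul_of_nonpos_right _ hnegq.le
            rw [inv_le_one_iff₀]; right; exact one_le_pow₀ (by norm_num))]
    field_simp
end

section
/- Let n ≥ 1 and j ≥ 1, and set α = 2^{-j}. Let x be an n-bit vector in sign-magnitude (true form) representation with sign s = x.msb, magnitude m = the unsigned value of the low n-1 bits, and value v = (-1)^s · m. Define the (n+j)-bit sign-magnitude output h(x) as follows: if s = false, the output has sign 0, the magnitude bits of x shifted to the integer positions, and j zero fractional bits (magnitude numerator m·2^j); if s = true, the output has sign 1 and magnitude numerator m (the bits of x placed j positions lower, with the intermediate bits left at 0). Then the fixed-point value of h(x), namely (-1)^{sign} · (magnitude numerator)/2^j, equals max(v, α·v). (This is the correctness of the Leaky ReLU circuit for true-form coding, where no bit flips are needed on the intermediate bits.) -/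
/-- Correctness of the Leaky ReLU circuit for sign-magnitude (true form)
coding with `α = 2⁻ʲ`: the input `x` has sign `s = msb x`, magnitude `m`
(the unsigned value of its low `n-1` bits) and value `v = (-1)^s · m`.  The
output has sign `s` and magnitude numerator `M = m · 2^j` if `s = false`
(bits shifted to the integer positions) and `M = m` if `s = true` (bits placed
`j` positions lower); its fixed-point value `(-1)^s · M / 2^j` equals
`max(v, α·v)`. -/
theorem leaky_relu_circuit_sign_magnitude (n j : ℕ) (hn : 1 ≤ n) (hj : 1 ≤ j)
    (x : BitVec n) :
    (-1 : ℚ) ^ x.msb.toNat *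
        (((if x.msb then x.toNat % 2 ^ (n - 1)
            else (x.toNat % 2 ^ (n - 1)) * 2 ^ j : ℕ)) : ℚ) / 2 ^ j =
      max ((-1 : ℚ) ^ x.msb.toNat * ((x.toNat % 2 ^ (n - 1) : ℕ) : ℚ))
        ((1 / 2 ^ j) *
          ((-1 : ℚ) ^ x.msb.toNat * ((x.toNat % 2 ^ (n - 1) : ℕ) : ℚ))) := by
  set m : ℚ := ((x.toNat % 2 ^ (n - 1) : ℕ) : ℚ) with hm
  have hm0 : 0 ≤ m := by positivity
  have h2 : (1 : ℚ) ≤ (2 : ℚ) ^ j := one_le_pow₀ (by norm_num)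
  have hmle : m / 2 ^ j ≤ m := by
    rw [div_le_iff₀ (by positivity)]
    nlinarith
  cases hb : x.msb with
  | false =>
    simp only [Bool.toNat_false, pow_zero, one_mul, if_false, Nat.cast_mul,
      Nat.cast_pow, Nat.cast_ofNat, Bool.false_eq_true, if_neg]
    rw [mul_div_assoc, div_self (by positivity), mul_one]
    rw [max_eq_left]
    rw [one_div, ← div_eq_inv_mul]
    exact hmle
  | true =>
    simp only [Bool.toNat_true, pow_one, if_true]
    rw [max_eq_right]
    · ring
    · rw [one_div, ← div_eq_inv_mul, neg_one_mul, neg_div]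
      exact neg_le_neg hmle
end
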